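/- The determinant of the Jacobian matrix of the right-hand side of system (N4) equals −(k₄k₆k₈ + k₂k₄k₆ + k₁k₄k₈x₁ + k₁k₆k₈x₂ + k₃k₆k₈ + k₂k₃k₆ + 3k₁k₃k₈x₁), and in particular is strictly negative for all x ∈ ℝ³_{>0} and all positive rate constants k₁,…,k₉. -/

import Mathlib

set_option maxHeartbeats 1000000 in
open ContinuousLinearMap in
/-- The determinant of the Jacobian of the right-hand side of system (N4) equals
`−(k₄k₆k₈ + k₂k₄k₆ + k₁k₄k₈x₁ + k₁k₆k₈x₂ + k₃k₆k₈ + k₂k₃k₆ + 3k₁k₃k₈x₁)`,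
and in particular is strictly negative on the positive orthant for all positive rate
constants. -/
theorem jacobian_determinant_N4
    (k₁ k₂ k₃ k₄ k₅ k₆ k₇ k₈ k₉ : ℝ)
    (hk₁ : 0 < k₁) (hk₂ : 0 < k₂) (hk₃ : 0 < k₃) (hk₄ : 0 < k₄) (hk₅ : 0 < k₅)
    (hk₆ : 0 < k₆) (hk₇ : 0 < k₇) (hk₈ : 0 < k₈) (hk₉ : 0 < k₉)
    (x : Fin 3 → ℝ) (hx : ∀ i, 0 < x i)
    (F : (Fin 3 → ℝ) → (Fin 3 → ℝ))
    (hF : F = fun x =>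
      ![k₅ - k₄ * x 0 - k₁ * x 0 * x 1 + k₂ * x 2 - k₃ * x 0,
        k₇ - k₆ * x 1 - k₁ * x 0 * x 1 + k₂ * x 2 + 2 * k₃ * x 0,
        k₉ - k₈ * x 2 + k₁ * x 0 * x 1 - k₂ * x 2])
    (J : Matrix (Fin 3) (Fin 3) ℝ)
    (hJ : J = Matrix.of fun i j => fderiv ℝ F x (Pi.single j 1) i) :
    J.det = -(k₄ * k₆ * k₈ + k₂ * k₄ * k₆ + k₁ * k₄ * k₈ * x 0 + k₁ * k₆ * k₈ * x 1
        + k₃ * k₆ * k₈ + k₂ * k₃ * k₆ + 3 * k₁ * k₃ * k₈ * x 0) ∧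
      J.det < 0 := by
  set p0 : (Fin 3 → ℝ) →L[ℝ] ℝ := ContinuousLinearMap.proj 0 with hp0
  set p1 : (Fin 3 → ℝ) →L[ℝ] ℝ := ContinuousLinearMap.proj 1 with hp1
  set p2 : (Fin 3 → ℝ) →L[ℝ] ℝ := ContinuousLinearMap.proj 2 with hp2
  have h0 : HasFDerivAt (fun y : Fin 3 → ℝ => y 0) p0 x := p0.hasFDerivAt
  have h1 : HasFDerivAt (fun y : Fin 3 → ℝ => y 1) p1 x := p1.hasFDerivAt
  have h2 : HasFDerivAt (fun y : Fin 3 → ℝ => y 2) p2 x := p2.hasFDerivAt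
  -- derivative of x0*x1 term
  have hmul : HasFDerivAt (fun y : Fin 3 → ℝ => k₁ * y 0 * y 1)
      ((k₁ * x 1) • p0 + (k₁ * x 0) • p1) x := by
    have := ((h0.const_mul k₁).mul h1)
    refine this.congr_fderiv ?_
    ext v
    simp [p0, p1]
    ring
  have D0 : HasFDerivAt (fun y : Fin 3 → ℝ =>
      k₅ - k₄ * y 0 - k₁ * y 0 * y 1 + k₂ * y 2 - k₃ * y 0)
      (((-k₄ - k₃ - k₁ * x 1) • p0) + ((-(k₁ * x 0)) • p1) + (k₂ • p2)) x := by
    have := ((((h0.const_mul k₄).const_sub k₅).sub hmul).add (h2.const_mul k₂)).sub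
      (h0.const_mul k₃)
    refine this.congr_fderiv ?_
    ext v
    simp [p0, p1, p2]
    ring
  have D1 : HasFDerivAt (fun y : Fin 3 → ℝ =>
      k₇ - k₆ * y 1 - k₁ * y 0 * y 1 + k₂ * y 2 + 2 * k₃ * y 0)
      (((2 * k₃ - k₁ * x 1) • p0) + ((-k₆ - k₁ * x 0) • p1) + (k₂ • p2)) x := by
    have := ((((h1.const_mul k₆).const_sub k₇).sub hmul).add (h2.const_mul k₂)).add
      (h0.const_mul (2 * k₃))
    refine this.congr_fderiv ?_
    ext v
    simp [p0, p1, p2]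
    ring
  have D2 : HasFDerivAt (fun y : Fin 3 → ℝ =>
      k₉ - k₈ * y 2 + k₁ * y 0 * y 1 - k₂ * y 2)
      (((k₁ * x 1) • p0) + ((k₁ * x 0) • p1) + ((-k₈ - k₂) • p2)) x := by
    have := (((h2.const_mul k₈).const_sub k₉).add hmul).sub (h2.const_mul k₂)
    refine this.congr_fderiv ?_
    ext v
    simp [p0, p1, p2]
    ring
  have hFd : HasFDerivAt F
      (ContinuousLinearMap.pi ![((-k₄ - k₃ - k₁ * x 1) • p0) + ((-(k₁ * x 0)) • p1) + (k₂ • p2),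
        ((2 * k₃ - k₁ * x 1) • p0) + ((-k₆ - k₁ * x 0) • p1) + (k₂ • p2),
        ((k₁ * x 1) • p0) + ((k₁ * x 0) • p1) + ((-k₈ - k₂) • p2)]) x := by
    rw [hasFDerivAt_pi']
    intro i
    fin_cases i
    · refine HasFDerivAt.congr_fderiv (f' := ((-k₄ - k₃ - k₁ * x 1) • p0) + ((-(k₁ * x 0)) • p1) + (k₂ • p2)) ?_ ?_
      · show HasFDerivAt (fun y => F y 0) _ x
        simp only [hF, Matrix.cons_val_zero]
        exact D0
      · ext v
        simp [ContinuousLinearMap.pi_apply]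
    · refine HasFDerivAt.congr_fderiv (f' := ((2 * k₃ - k₁ * x 1) • p0) + ((-k₆ - k₁ * x 0) • p1) + (k₂ • p2)) ?_ ?_
      · show HasFDerivAt (fun y => F y 1) _ x
        simp only [hF, Matrix.cons_val_one, Matrix.head_cons]
        exact D1
      · ext v
        simp [ContinuousLinearMap.pi_apply]
    · refine HasFDerivAt.congr_fderiv (f' := ((k₁ * x 1) • p0) + ((k₁ * x 0) • p1) + ((-k₈ - k₂) • p2)) ?_ ?_
      · show HasFDerivAt (fun y => F y 2) _ x
        simp only [hF, Matrix.cons_val_two, Matrix.tail_cons, Matrix.head_cons]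
        exact D2
      · ext v
        simp [ContinuousLinearMap.pi_apply]
  have hfd := hFd.fderiv
  have key : J.det = -(k₄ * k₆ * k₈ + k₂ * k₄ * k₆ + k₁ * k₄ * k₈ * x 0 + k₁ * k₆ * k₈ * x 1
        + k₃ * k₆ * k₈ + k₂ * k₃ * k₆ + 3 * k₁ * k₃ * k₈ * x 0) := by
    rw [Matrix.det_fin_three]
    simp only [hJ, Matrix.of_apply, hfd]
    simp [ContinuousLinearMap.pi_apply, p0, p1, p2, Pi.single, Function.update]
    ring
  refine ⟨key, ?_⟩
  rw [key]
  have h0' := hx 0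
  have h1' := hx 1
  nlinarith [mul_pos (mul_pos hk₄ hk₆) hk₈, mul_pos (mul_pos hk₂ hk₄) hk₆,
    mul_pos (mul_pos (mul_pos hk₁ hk₄) hk₈) h0', mul_pos (mul_pos (mul_pos hk₁ hk₆) hk₈) h1',
    mul_pos (mul_pos hk₃ hk₆) hk₈, mul_pos (mul_pos hk₂ hk₃) hk₆,
    mul_pos (mul_pos (mul_pos hk₁ hk₃) hk₈) h0']
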